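/- Let P be a monic irreducible polynomial of degree d in A = F_q[θ], and v_P the P-adic valuation with v_P(P) = 1. Define D_0 = 1 and D_i = (θ^{q^i} − θ) D_{i−1}^q for i ≥ 1. Then for all i ≥ 0, v_P(D_i) = (q^i − q^{i − ⌊i/d⌋·d})/(q^d − 1). -/

import Mathlib

open Polynomial

private lemma geomAux (q d : ℕ) (hq : 2 ≤ q) (s r : ℕ) (hr : r < d) :
    (∑ k ∈ Finset.range (r + s * d), if d ∣ (r + s * d - k) then q ^ k else 0) * (q ^ d - 1)
      = q ^ (r + s * d) - q ^ r := by
  induction s with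
  | zero =>
    have h0 : ∀ k ∈ Finset.range (r + 0 * d),
        (if d ∣ (r + 0 * d - k) then q ^ k else 0) = 0 := by
      intro k hk
      rw [Finset.mem_range] at hk
      rw [if_neg]
      intro hdvd
      have h1 : d ≤ r + 0 * d - k := Nat.le_of_dvd (by omega) hdvd
      omega
    rw [Finset.sum_eq_zero h0]
    simp
  | succ s ih =>
    have hn : r + (s + 1) * d = (r + s * d) + d := by rw [Nat.succ_mul]; omega
    set n := r + s * d with hn'
    rw [hn, Finset.sum_range_add]
    have e1 : ∀ k ∈ Finset.range n,
        (if d ∣ (n + d - k) then q ^ k else 0) = (if d ∣ (n - k) then q ^ k else 0) := by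
      intro k hk
      rw [Finset.mem_range] at hk
      have h : n + d - k = (n - k) + d := by omega
      simp only [h, Nat.dvd_add_self_right]
    rw [Finset.sum_congr rfl e1]
    have e2 : (∑ k ∈ Finset.range d, if d ∣ (n + d - (n + k)) then q ^ (n + k) else 0)
        = q ^ n := by
      rw [Finset.sum_eq_single_of_mem 0 (Finset.mem_range.2 (by omega))]
      · simp
      · intro k hk hk0
        rw [Finset.mem_range] at hk
        rw [if_neg]
        intro hdvd
        have h2 : n + d - (n + k) = d - k := by omega
        rw [h2] at hdvd
        have := Nat.le_of_dvd (by omega) hdvd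
        omega
    rw [e2]
    have h1 : (1 : ℕ) ≤ q ^ d := Nat.one_le_pow _ _ (by omega)
    have h2 : q ^ r ≤ q ^ n := Nat.pow_le_pow_right (by omega) (by omega)
    have h3 : q ^ r ≤ q ^ (n + d) := Nat.pow_le_pow_right (by omega) (by omega)
    zify [h1, h2, h3] at ih ⊢
    rw [pow_add]
    linear_combination ih

private lemma powSubOneDvd {q : ℕ} (hq : 2 ≤ q) {d m : ℕ} (hd : 0 < d)
    (h : q ^ d - 1 ∣ q ^ m - 1) : d ∣ m := by
  by_contra hnd
  set t := m % d with ht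
  have h0 : t ≠ 0 := fun h0 => hnd (Nat.dvd_of_mod_eq_zero h0)
  have htd : t < d := Nat.mod_lt _ hd
  have htm : t ≤ m := Nat.mod_le m d
  have hm : m = d * (m / d) + t := (Nat.div_add_mod m d).symm
  have h1 : q ^ d - 1 ∣ q ^ (d * (m / d)) - 1 := by
    rw [pow_mul]; exact Nat.sub_one_dvd_pow_sub_one (q ^ d) (m / d)
  have h2 : q ^ d - 1 ∣ (q ^ (d * (m / d)) - 1) * q ^ t := h1.mul_right _
  have h3 : (q ^ (d * (m / d)) - 1) * q ^ t = q ^ m - q ^ t := by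
    rw [Nat.sub_mul, one_mul, ← pow_add, ← hm]
  rw [h3] at h2
  have h4 : q ^ d - 1 ∣ q ^ t - 1 := by
    have h5 := Nat.dvd_sub h h2
    have hle1 : q ^ t ≤ q ^ m := Nat.pow_le_pow_right (by omega) htm
    have hle2 : 1 ≤ q ^ t := Nat.one_le_pow _ _ (by omega)
    have e : (q ^ m - 1) - (q ^ m - q ^ t) = q ^ t - 1 := by omega
    rwa [e] at h5
  have hqt : q ≤ q ^ t := Nat.le_self_pow h0 q
  have h5 : q ^ d - 1 ≤ q ^ t - 1 := Nat.le_of_dvd (by omega) h4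
  have h6 : q ^ t < q ^ d := Nat.pow_lt_pow_right (by omega) htd
  omega

private lemma dvdXqmX (F : Type*) [Field F] [Fintype F]
    (P : Polynomial F) (hPirr : Irreducible P) {m : ℕ} (hm : 0 < m) :
    P ∣ ((X : Polynomial F) ^ (Fintype.card F) ^ m - X) ↔ P.natDegree ∣ m := by
  classical
  haveI := Fact.mk hPirr
  set q := Fintype.card F with hq
  set d := P.natDegree with hd
  have hq2 : 2 ≤ q := Fintype.one_lt_card
  have hd0 : 0 < d := hPirr.natDegree_pos
  have hP0 : P ≠ 0 := hPirr.ne_zero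
  set L := AdjoinRoot P with hL
  haveI : Module.Finite F L := Module.Finite.of_basis (AdjoinRoot.powerBasis hP0).basis
  haveI : Finite L := Module.finite_of_finite F
  letI : Fintype L := Fintype.ofFinite L
  have hcard : Fintype.card L = q ^ d := by
    rw [Module.card_eq_pow_finrank (K := F), (AdjoinRoot.powerBasis hP0).finrank]
    rfl
  have hdvd : P ∣ ((X : Polynomial F) ^ q ^ m - X) ↔
      (AdjoinRoot.root P) ^ q ^ m = AdjoinRoot.root P := by
    rw [← AdjoinRoot.mk_eq_zero, map_sub, map_pow, AdjoinRoot.mk_X, sub_eq_zero]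
  rw [hdvd]
  constructor
  · intro hroot
    -- set up characteristic
    set p := ringChar F with hp'
    haveI : CharP F p := ringChar.charP F
    have hp : p.Prime := CharP.char_is_prime F p
    haveI := Fact.mk hp
    obtain ⟨e, -, hcardF⟩ := FiniteField.card F p
    rw [← hq] at hcardF
    haveI : CharP L p :=
      charP_of_injective_algebraMap (algebraMap F L).injective p
    haveI : ExpChar L p := ExpChar.prime hp
    set φ : L →+* L := iterateFrobenius L p ((e : ℕ) * m) with hφ'
    have hφ : ∀ y : L, φ y = y ^ q ^ m := by
      intro y
      rw [hφ', iterateFrobenius_def]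
      congr 1
      rw [hcardF, ← pow_mul]
    -- every element of L is fixed by y ↦ y ^ q ^ m
    have hfix : ∀ y : L, y ^ q ^ m = y := by
      intro y
      obtain ⟨f, rfl⟩ := AdjoinRoot.mk_surjective y
      rw [← AdjoinRoot.aeval_eq, Polynomial.aeval_def, ← hφ, Polynomial.hom_eval₂]
      have hcomp : φ.comp (algebraMap F L) = algebraMap F L := by
        ext a
        rw [RingHom.comp_apply, hφ, ← map_pow]
        congr 1
        exact FiniteField.pow_card_pow m a
      rw [hcomp, hφ, hroot]
    -- extract the cyclic generator
    obtain ⟨g, hg⟩ := IsCyclic.exists_generator (α := Lˣ)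
    have hord : orderOf g = q ^ d - 1 := by
      rw [orderOf_eq_card_of_forall_mem_zpowers hg, Nat.card_eq_fintype_card,
        Fintype.card_units, hcard]
    have hq1m : 1 ≤ q ^ m := Nat.one_le_pow _ _ (by omega)
    have hgm : g ^ q ^ m = g := by
      apply Units.ext
      rw [Units.val_pow_eq_pow_val]
      exact hfix (g : L)
    have hg1 : g ^ (q ^ m - 1) = 1 := by
      have h7 : g ^ (q ^ m - 1) * g = 1 * g := by
        rw [one_mul, ← pow_succ, Nat.sub_add_cancel hq1m, hgm]
      exact mul_right_cancel h7
    have hdvd2 : q ^ d - 1 ∣ q ^ m - 1 := hord ▸ orderOf_dvd_of_pow_eq_one hg1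
    exact powSubOneDvd hq2 hd0 hdvd2
  · rintro ⟨t, rfl⟩
    have h8 : q ^ (d * t) = Fintype.card L ^ t := by rw [hcard, ← pow_mul]
    rw [h8]
    exact FiniteField.pow_card_pow t (AdjoinRoot.root P)

private lemma sqfreeX (F : Type*) [Field F] [Fintype F] {m : ℕ} (hm : 0 < m) :
    Squarefree ((X : Polynomial F) ^ (Fintype.card F) ^ m - X) := by
  apply Polynomial.Separable.squarefree
  rw [Polynomial.separable_def]
  convert isCoprime_one_right.neg_right using 1
  · rfl
  rw [derivative_sub, derivative_X, derivative_X_pow]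
  have h0 : ((Fintype.card F ^ m : ℕ) : F) = 0 := by
    rw [Nat.cast_pow, Nat.cast_card_eq_zero, zero_pow hm.ne']
  rw [h0, map_zero, zero_mul, zero_sub]

/-- For a prime `P` of `A = F_q[θ]` of degree `d`, the `P`-adic valuation of the
Carlitz factorial `D_i = ∏_{k=0}^{i−1} (θ^{q^i} − θ^{q^k})` equals
`(q^i − q^{i − ⌊i/d⌋·d})/(q^d − 1)`. -/
theorem stmt2 (F : Type*) [Field F] [Fintype F] (q : ℕ) (hq : q = Fintype.card F)
    (P : Polynomial F) (hPirr : Irreducible P) (hPmon : P.Monic)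
    (d : ℕ) (hd : d = P.natDegree) (i : ℕ) :
    P ^ ((q ^ i - q ^ (i - i / d * d)) / (q ^ d - 1)) ∣
      ∏ k ∈ Finset.range i,
        ((Polynomial.X : Polynomial F) ^ q ^ i - Polynomial.X ^ q ^ k) ∧
    ¬ P ^ ((q ^ i - q ^ (i - i / d * d)) / (q ^ d - 1) + 1) ∣
      ∏ k ∈ Finset.range i,
        ((Polynomial.X : Polynomial F) ^ q ^ i - Polynomial.X ^ q ^ k) := by
  classical
  subst hq hd
  set q := Fintype.card F with hq'
  set d := P.natDegree with hd'
  have hq2 : 2 ≤ q := Fintype.one_lt_card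
  have hd1 : 0 < d := hPirr.natDegree_pos
  have hprime : Prime P := hPirr.prime
  -- characteristic setup
  set p := ringChar F with hp'
  haveI : CharP F p := ringChar.charP F
  have hp : p.Prime := CharP.char_is_prime F p
  haveI := Fact.mk hp
  obtain ⟨e, -, hcardF⟩ := FiniteField.card F p
  rw [← hq'] at hcardF
  haveI : CharP (Polynomial F) p := Polynomial.instCharP _
  -- factor identity
  have hfac : ∀ k, k < i → (X : Polynomial F) ^ q ^ i - X ^ q ^ k
      = ((X : Polynomial F) ^ q ^ (i - k) - X) ^ q ^ k := by
    intro k hk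
    have hqk : q ^ k = p ^ ((e : ℕ) * k) := by rw [hcardF, ← pow_mul]
    have hexp : q ^ (i - k) * q ^ k = q ^ i := by
      rw [← pow_add, Nat.sub_add_cancel hk.le]
    calc (X : Polynomial F) ^ q ^ i - X ^ q ^ k
        = ((X : Polynomial F) ^ q ^ (i - k)) ^ q ^ k - X ^ q ^ k := by
          rw [← pow_mul, hexp]
      _ = ((X : Polynomial F) ^ q ^ (i - k) - X) ^ q ^ k := by
          rw [hqk, sub_pow_char_pow]
  -- emultiplicity of each factor
  have hmult : ∀ k, k < i → emultiplicity P ((X : Polynomial F) ^ q ^ i - X ^ q ^ k)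
      = ((if d ∣ (i - k) then q ^ k else 0 : ℕ) : ℕ∞) := by
    intro k hk
    have him : 0 < i - k := by omega
    rw [hfac k hk, emultiplicity_pow hprime]
    by_cases hdd : d ∣ (i - k)
    · rw [if_pos hdd]
      have h1 : emultiplicity P ((X : Polynomial F) ^ q ^ (i - k) - X) = ((1 : ℕ) : ℕ∞) := by
        rw [emultiplicity_eq_coe]
        constructor
        · simpa using (dvdXqmX F P hPirr him).2 hdd
        · intro hcon
          have hsq := sqfreeX F (m := i - k) him
          refine hPirr.not_isUnit (hsq P ?_)
          have : P ^ (1 + 1) = P * P := by ring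
          rwa [this] at hcon
      rw [h1]
      simp
    · rw [if_neg hdd]
      rw [emultiplicity_eq_zero.2 (fun hdvd => hdd ((dvdXqmX F P hPirr him).1 hdvd))]
      simp
  -- total emultiplicity
  have key : emultiplicity P (∏ k ∈ Finset.range i,
        ((X : Polynomial F) ^ q ^ i - X ^ q ^ k))
      = ((∑ k ∈ Finset.range i, if d ∣ (i - k) then q ^ k else 0 : ℕ) : ℕ∞) := by
    rw [Finset.emultiplicity_prod hprime, Nat.cast_sum]
    exact Finset.sum_congr rfl fun k hk => hmult k (Finset.mem_range.1 hk)
  -- arithmetic identification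
  have hcomm : d * (i / d) = i / d * d := Nat.mul_comm _ _
  have hdm := Nat.div_add_mod i d
  have hmod : i - i / d * d = i % d := by omega
  have hi : i % d + (i / d) * d = i := by omega
  have hsum := geomAux q d hq2 (i / d) (i % d) (Nat.mod_lt _ hd1)
  rw [hi] at hsum
  have hqd1 : 2 ≤ q ^ d := by
    calc 2 ≤ q := hq2
    _ = q ^ 1 := (pow_one q).symm
    _ ≤ q ^ d := Nat.pow_le_pow_right (by omega) hd1
  have hE : (∑ k ∈ Finset.range i, if d ∣ (i - k) then q ^ k else 0)
      = (q ^ i - q ^ (i - i / d * d)) / (q ^ d - 1) := by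
    rw [hmod, ← hsum, Nat.mul_div_cancel _ (by omega)]
  rw [hE] at key
  exact emultiplicity_eq_coe.mp key
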